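/- Let H_G, H_A, H_Ā, H_B, H_B̄, H_C, H_C̄, H_F be finite-dimensional complex Hilbert spaces and let U1 : H_G → H_A ⊗ H_Ā, U2 : H_A ⊗ H_Ā → H_B ⊗ H_B̄, U3 : H_B ⊗ H_B̄ → H_C ⊗ H_C̄, U4 : H_C ⊗ H_C̄ → H_F be unitary operators. Let H_{A'}, H_{B'}, H_{C'} be copies of H_A, H_B, H_C, and let U : H_{A'} ⊗ H_{B'} ⊗ H_{C'} ⊗ H_G → H_A ⊗ H_B ⊗ H_C ⊗ H_F be the 'comb' unitary obtained as follows: apply U1 to the H_G factor (producing factors H_A and H_Ā), then apply U2 to H_{A'} ⊗ H_Ā (producing H_B and H_B̄), then apply U3 to H_{B'} ⊗ H_B̄ (producing H_C and H_C̄), then apply U4 to H_{C'} ⊗ H_C̄ (producing H_F), carrying the produced factors H_A, H_B, H_C unchanged to the output; formally U is the composite of U1 ⊗ 1, U2 ⊗ 1, U3 ⊗ 1, U4 ⊗ 1 interleaved with the canonical tensor-factor permutation unitaries. Suppose P is an orthogonal projection on H_A such that U (P ⊗ 1_{B'C'G}) U* = 1_{ABC} ⊗ M for some operator M on H_F. Then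 for every linear operator R on H_C, [ U4 U3 U2 (P ⊗ 1_Ā) U2* U3* U4* , U4 (R ⊗ 1_C̄) U4* ] = 0 (as operators on H_F). -/

import Mathlib

open Matrix
open scoped Kronecker


private lemma rot3 {α β γ : Type} [Fintype α] [Fintype β] [Fintype γ] (f : α → β → γ → ℂ) :
    (∑ a : α, ∑ b : β, ∑ c : γ, f a b c) = ∑ c : γ, ∑ a : α, ∑ b : β, f a b c :=
  (Finset.sum_congr rfl fun a _ => Finset.sum_comm).trans Finset.sum_comm

private lemma rot4 {α β γ δ : Type} [Fintype α] [Fintype β] [Fintype γ] [Fintype δ]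
    (f : α → β → γ → δ → ℂ) :
    (∑ a : α, ∑ b : β, ∑ c : γ, ∑ d : δ, f a b c d)
      = ∑ d : δ, ∑ a : α, ∑ b : β, ∑ c : γ, f a b c d :=
  (Finset.sum_congr rfl fun a _ => rot3 (f a)).trans Finset.sum_comm

private lemma rot5 {α β γ δ ε : Type} [Fintype α] [Fintype β] [Fintype γ] [Fintype δ] [Fintype ε]
    (f : α → β → γ → δ → ε → ℂ) :
    (∑ a : α, ∑ b : β, ∑ c : γ, ∑ d : δ, ∑ e : ε, f a b c d e)
      = ∑ e : ε, ∑ a : α, ∑ b : β, ∑ c : γ, ∑ d : δ, f a b c d e :=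
  (Finset.sum_congr rfl fun a _ => rot4 (f a)).trans Finset.sum_comm

private lemma rot6 {α β γ δ ε ζ : Type} [Fintype α] [Fintype β] [Fintype γ] [Fintype δ]
    [Fintype ε] [Fintype ζ] (f : α → β → γ → δ → ε → ζ → ℂ) :
    (∑ a : α, ∑ b : β, ∑ c : γ, ∑ d : δ, ∑ e : ε, ∑ w : ζ, f a b c d e w)
      = ∑ w : ζ, ∑ a : α, ∑ b : β, ∑ c : γ, ∑ d : δ, ∑ e : ε, f a b c d e w :=
  (Finset.sum_congr rfl fun a _ => rot5 (f a)).trans Finset.sum_comm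

private lemma rot7 {α β γ δ ε ζ η : Type} [Fintype α] [Fintype β] [Fintype γ] [Fintype δ]
    [Fintype ε] [Fintype ζ] [Fintype η] (f : α → β → γ → δ → ε → ζ → η → ℂ) :
    (∑ a : α, ∑ b : β, ∑ c : γ, ∑ d : δ, ∑ e : ε, ∑ w : ζ, ∑ t : η, f a b c d e w t)
      = ∑ t : η, ∑ a : α, ∑ b : β, ∑ c : γ, ∑ d : δ, ∑ e : ε, ∑ w : ζ, f a b c d e w t :=
  (Finset.sum_congr rfl fun a _ => rot6 (f a)).trans Finset.sum_comm

private lemma comm4 {ι κ : Type} [Fintype ι] [Fintype κ] (f : κ → κ → ι → ι → ℂ) :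
    (∑ x : ι, ∑ y : ι, ∑ p : κ, ∑ q : κ, f p q x y)
      = ∑ p : κ, ∑ q : κ, ∑ x : ι, ∑ y : ι, f p q x y := by
  calc (∑ x : ι, ∑ y : ι, ∑ p : κ, ∑ q : κ, f p q x y)
      = ∑ x : ι, ∑ p : κ, ∑ y : ι, ∑ q : κ, f p q x y :=
        Finset.sum_congr rfl fun x _ => Finset.sum_comm
    _ = ∑ p : κ, ∑ x : ι, ∑ y : ι, ∑ q : κ, f p q x y := Finset.sum_comm
    _ = ∑ p : κ, ∑ x : ι, ∑ q : κ, ∑ y : ι, f p q x y :=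
        Finset.sum_congr rfl fun p _ => Finset.sum_congr rfl fun x _ => Finset.sum_comm
    _ = ∑ p : κ, ∑ q : κ, ∑ x : ι, ∑ y : ι, f p q x y :=
        Finset.sum_congr rfl fun p _ => Finset.sum_comm

private lemma tri_apply {ι κ lam ι₂ : Type} [Fintype ι] [Fintype κ] [Fintype lam] [Fintype ι₂]
    (V : Matrix ι κ ℂ) (Z : Matrix κ lam ℂ) (W : Matrix ι₂ lam ℂ) (i : ι) (j : ι₂) :
    (V * Z * Wᴴ) i j = ∑ p : κ, ∑ q : lam, V i p * Z p q * star (W j q) := by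
  simp only [Matrix.mul_apply, Matrix.conjTranspose_apply, Finset.sum_mul]
  rw [Finset.sum_comm]

private lemma sandwichM {ι κ : Type} [Fintype ι] [Fintype κ]
    (V : Matrix ι κ ℂ) (M' : Matrix ι ι ℂ) (u v : κ) :
    (∑ x : ι, ∑ y : ι, star (V x u) * M' x y * V y v) = (Vᴴ * M' * V) u v := by
  simp only [Matrix.mul_apply, Matrix.conjTranspose_apply, Finset.sum_mul]
  rw [Finset.sum_comm]

private lemma sandwich_collapse {ι κ : Type} [Fintype ι] [Fintype κ] [DecidableEq κ]
    (V : Matrix ι κ ℂ) (hV : Vᴴ * V = 1) (χ : κ → κ → ℂ) (u v : κ) :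
    (∑ x : ι, ∑ y : ι, star (V x u) * (∑ p : κ, ∑ q : κ, V x p * χ p q * star (V y q)) * V y v)
      = χ u v := by
  have hVe : ∀ p q : κ, (∑ x : ι, star (V x p) * V x q) = if p = q then (1:ℂ) else 0 := by
    intro p q
    have h := congrFun (congrFun hV p) q
    simpa [Matrix.mul_apply, Matrix.conjTranspose_apply, Matrix.one_apply] using h
  calc (∑ x : ι, ∑ y : ι, star (V x u) * (∑ p : κ, ∑ q : κ, V x p * χ p q * star (V y q)) * V y v)
      = ∑ x : ι, ∑ y : ι, ∑ p : κ, ∑ q : κ,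
          star (V x u) * (V x p * χ p q * star (V y q)) * V y v := by
        refine Finset.sum_congr rfl fun x _ => Finset.sum_congr rfl fun y _ => ?_
        simp only [Finset.mul_sum, Finset.sum_mul]
    _ = ∑ p : κ, ∑ q : κ, ∑ x : ι, ∑ y : ι,
          star (V x u) * (V x p * χ p q * star (V y q)) * V y v := comm4 _
    _ = ∑ p : κ, ∑ q : κ,
          (∑ x : ι, star (V x u) * V x p) * χ p q * (∑ y : ι, star (V y q) * V y v) := by
        refine Finset.sum_congr rfl fun p _ => Finset.sum_congr rfl fun q _ => ?_
        simp only [Finset.mul_sum, Finset.sum_mul]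
        rw [Finset.sum_comm]
        exact Finset.sum_congr rfl fun x _ => Finset.sum_congr rfl fun y _ => by ring
    _ = χ u v := by
        simp only [hVe]
        simp [ite_mul, mul_ite, zero_mul, mul_zero, one_mul, mul_one,
          Finset.sum_ite_eq, Finset.sum_ite_eq']

private lemma prodsum {α β : Type} [Fintype α] [DecidableEq α] [Fintype β]
    (g h : α × β → ℂ) (w : β → β → ℂ) :
    (∑ p : α × β, ∑ q : α × β, g p * ((if p.1 = q.1 then (1:ℂ) else 0) * w p.2 q.2) * h q)
      = ∑ c' : α, ∑ cb : β, ∑ cb₂ : β, g (c', cb) * w cb cb₂ * h (c', cb₂) := by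
  rw [Fintype.sum_prod_type]
  refine Finset.sum_congr rfl fun c' _ => Finset.sum_congr rfl fun cb _ => ?_
  rw [Fintype.sum_prod_type, Finset.sum_comm]
  refine Finset.sum_congr rfl fun cb₂ _ => ?_
  simp [ite_mul, mul_ite, zero_mul, mul_zero, Finset.sum_ite_eq, Finset.sum_ite_eq']

private lemma kron_tri {ι α β : Type} [Fintype ι] [Fintype α] [DecidableEq α] [Fintype β]
    [DecidableEq β] (V : Matrix ι (α × β) ℂ) (Pm : Matrix α α ℂ) (i j : ι) :
    (V * (Pm ⊗ₖ (1 : Matrix β β ℂ)) * Vᴴ) i j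
      = ∑ a' : α, ∑ a'' : α, ∑ ab : β, V i (a', ab) * Pm a' a'' * star (V j (a'', ab)) := by
  rw [tri_apply]
  simp only [Fintype.sum_prod_type, Matrix.kroneckerMap_apply, Matrix.one_apply, mul_ite, ite_mul,
    mul_one, mul_zero, zero_mul, Finset.sum_ite_eq, Finset.sum_ite_eq', Finset.mem_univ, if_true]
  refine Finset.sum_congr rfl fun a' _ => ?_
  rw [Finset.sum_comm]

private lemma pair_collapse {α γ : Type} [Fintype α] [DecidableEq α] [Fintype γ]
    (u : α → γ → ℂ) (hu : ∀ x y : α, (∑ g : γ, u x g * star (u y g)) = if x = y then (1:ℂ) else 0)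
    (φ ψ : α → ℂ) :
    (∑ g : γ, (∑ x : α, u x g * φ x) * star (∑ y : α, u y g * ψ y))
      = ∑ x : α, φ x * star (ψ x) := by
  calc (∑ g : γ, (∑ x : α, u x g * φ x) * star (∑ y : α, u y g * ψ y))
      = ∑ g : γ, ∑ x : α, ∑ y : α, (u x g * star (u y g)) * (φ x * star (ψ y)) := by
        refine Finset.sum_congr rfl fun g _ => ?_
        rw [star_sum]
        simp only [Finset.sum_mul, Finset.mul_sum]
        rw [Finset.sum_comm]
        refine Finset.sum_congr rfl fun x _ => Finset.sum_congr rfl fun y _ => ?_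
        rw [star_mul']
        ring
    _ = ∑ x : α, ∑ y : α, ∑ g : γ, (u x g * star (u y g)) * (φ x * star (ψ y)) := by
        rw [rot3, rot3]
    _ = ∑ x : α, ∑ y : α, (if x = y then (1:ℂ) else 0) * (φ x * star (ψ y)) := by
        refine Finset.sum_congr rfl fun x _ => Finset.sum_congr rfl fun y _ => ?_
        rw [← Finset.sum_mul, hu]
    _ = ∑ x : α, φ x * star (ψ x) := by
        simp [ite_mul, zero_mul, one_mul, Finset.sum_ite_eq, Finset.sum_ite_eq']

/-- core commutation result of Appendix D of the paper.  Let
`U1 : H_G → H_A ⊗ H_Ā`, `U2 : H_A ⊗ H_Ā → H_B ⊗ H_B̄`, `U3 : H_B ⊗ H_B̄ → H_C ⊗ H_C̄`,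
`U4 : H_C ⊗ H_C̄ → H_F` be unitaries, and `U` the associated comb unitary
`H_{A'} ⊗ H_{B'} ⊗ H_{C'} ⊗ H_G → H_A ⊗ H_B ⊗ H_C ⊗ H_F`, given entrywise by
`U((a,b,c),f)((a',(b',(c',g)))) = Σ_{ā,b̄,c̄} U1(a,ā)(g)·U2(b,b̄)(a',ā)·U3(c,c̄)(b',b̄)·U4(f)(c',c̄)`
(the composite of the `Ui ⊗ 1` interleaved with the canonical tensor-factor permutations).
If `P` is an orthogonal projection on `H_A` with `U(P ⊗ 1_{B'C'G})U* = 1_{ABC} ⊗ M` for some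
`M` on `H_F`, then `U4U3U2(P ⊗ 1_Ā)U2*U3*U4*` commutes with `U4(R ⊗ 1_C̄)U4*` for every
operator `R` on `H_C`. -/
theorem stmt3 {G A Abar B Bbar C Cbar F : Type}
    [Fintype G] [DecidableEq G] [Fintype A] [DecidableEq A]
    [Fintype Abar] [DecidableEq Abar] [Fintype B] [DecidableEq B]
    [Fintype Bbar] [DecidableEq Bbar] [Fintype C] [DecidableEq C]
    [Fintype Cbar] [DecidableEq Cbar] [Fintype F] [DecidableEq F]
    (U1 : Matrix (A × Abar) G ℂ) (hU1 : U1 * U1ᴴ = 1 ∧ U1ᴴ * U1 = 1)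
    (U2 : Matrix (B × Bbar) (A × Abar) ℂ) (hU2 : U2 * U2ᴴ = 1 ∧ U2ᴴ * U2 = 1)
    (U3 : Matrix (C × Cbar) (B × Bbar) ℂ) (hU3 : U3 * U3ᴴ = 1 ∧ U3ᴴ * U3 = 1)
    (U4 : Matrix F (C × Cbar) ℂ) (hU4 : U4 * U4ᴴ = 1 ∧ U4ᴴ * U4 = 1)
    (U : Matrix ((A × (B × C)) × F) (A × (B × (C × G))) ℂ)
    (hU : U = Matrix.of fun p q =>
      ∑ abar : Abar, ∑ bbar : Bbar, ∑ cbar : Cbar,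
        U1 (p.1.1, abar) q.2.2.2 * U2 (p.1.2.1, bbar) (q.1, abar) *
          U3 (p.1.2.2, cbar) (q.2.1, bbar) * U4 p.2 (q.2.2.1, cbar))
    (P : Matrix A A ℂ) (hP : Pᴴ = P ∧ P * P = P)
    (M : Matrix F F ℂ)
    (hM : U * ((P ⊗ₖ (1 : Matrix (B × (C × G)) (B × (C × G)) ℂ))) * Uᴴ
      = (1 : Matrix (A × (B × C)) (A × (B × C)) ℂ) ⊗ₖ M) :
    ∀ R : Matrix C C ℂ,
      (U4 * (U3 * (U2 * (P ⊗ₖ (1 : Matrix Abar Abar ℂ)) * U2ᴴ) * U3ᴴ) * U4ᴴ) *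
          (U4 * (R ⊗ₖ (1 : Matrix Cbar Cbar ℂ)) * U4ᴴ)
        = (U4 * (R ⊗ₖ (1 : Matrix Cbar Cbar ℂ)) * U4ᴴ) *
          (U4 * (U3 * (U2 * (P ⊗ₖ (1 : Matrix Abar Abar ℂ)) * U2ᴴ) * U3ᴴ) * U4ᴴ) := by
  intro R
  classical
  rcases isEmpty_or_nonempty F with hFe | hFn
  · ext f f'
    exact (hFe.false f).elim
  -- entrywise unitarity of U1 (rows)
  have e1 : ∀ x y : A × Abar, (∑ g : G, U1 x g * star (U1 y g)) = if x = y then (1:ℂ) else 0 := by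
    intro x y
    have h := congrFun (congrFun hU1.1 x) y
    simpa [Matrix.mul_apply, Matrix.conjTranspose_apply, Matrix.one_apply] using h
  -- nonemptiness cascade
  have hCCn : Nonempty (C × Cbar) := by
    by_contra hc
    rw [not_nonempty_iff] at hc
    obtain ⟨f⟩ := hFn
    have h := congrFun (congrFun hU4.1 f) f
    rw [Matrix.mul_apply] at h
    simp [Matrix.one_apply] at h
  have hBBn : Nonempty (B × Bbar) := by
    by_contra hc
    rw [not_nonempty_iff] at hc
    obtain ⟨p⟩ := hCCn
    have h := congrFun (congrFun hU3.1 p) p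
    rw [Matrix.mul_apply] at h
    simp [Matrix.one_apply] at h
  have hAAn : Nonempty (A × Abar) := by
    by_contra hc
    rw [not_nonempty_iff] at hc
    obtain ⟨p⟩ := hBBn
    have h := congrFun (congrFun hU2.1 p) p
    rw [Matrix.mul_apply] at h
    simp [Matrix.one_apply] at h
  obtain ⟨⟨c0, -⟩⟩ := hCCn
  obtain ⟨⟨b0, -⟩⟩ := hBBn
  obtain ⟨⟨a0, -⟩⟩ := hAAn
  have hu1pair : ∀ x y : Abar,
      (∑ g : G, U1 (a0, x) g * star (U1 (a0, y) g)) = if x = y then (1:ℂ) else 0 := by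
    intro x y
    have h := e1 (a0, x) (a0, y)
    simpa [Prod.mk.injEq] using h
  -- fold Q2 in the goal
  obtain ⟨Q2, hQ2def⟩ : ∃ Q2 : Matrix (B × Bbar) (B × Bbar) ℂ,
      Q2 = U2 * (P ⊗ₖ (1 : Matrix Abar Abar ℂ)) * U2ᴴ := ⟨_, rfl⟩
  rw [← hQ2def]
  have hQ2e : ∀ (b : B) (bb : Bbar) (b₂ : B) (bb₂ : Bbar),
      Q2 (b, bb) (b₂, bb₂)
        = ∑ a' : A, ∑ a'' : A, ∑ ab : Abar,
            U2 (b, bb) (a', ab) * P a' a'' * star (U2 (b₂, bb₂) (a'', ab)) := by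
    intro b bb b₂ bb₂
    rw [hQ2def]
    exact kron_tri U2 P _ _
  obtain ⟨s, hsdef⟩ : ∃ s : B → C → Cbar → B → C → Cbar → ℂ,
      s = fun b c cb b₂ c₂ cb₂ => ∑ b' : B, ∑ bb : Bbar, ∑ bb₂ : Bbar,
        U3 (c, cb) (b', bb) * Q2 (b, bb) (b₂, bb₂) * star (U3 (c₂, cb₂) (b', bb₂)) := ⟨_, rfl⟩
  have hse : ∀ b c cb b₂ c₂ cb₂, s b c cb b₂ c₂ cb₂
      = ∑ b' : B, ∑ bb : Bbar, ∑ bb₂ : Bbar,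
          U3 (c, cb) (b', bb) * Q2 (b, bb) (b₂, bb₂) * star (U3 (c₂, cb₂) (b', bb₂)) := by
    intro b c cb b₂ c₂ cb₂
    simp only [hsdef]
  -- U entry formula
  have hUe : ∀ (a : A) (b : B) (c : C) (f : F) (a' : A) (b' : B) (c' : C) (g : G),
      U ((a, (b, c)), f) (a', (b', (c', g)))
        = ∑ cb : Cbar, (∑ ab : Abar, ∑ bb : Bbar,
            U1 (a, ab) g * U2 (b, bb) (a', ab) * U3 (c, cb) (b', bb)) * U4 f (c', cb) := by
    intro a b c f a' b' c' g
    rw [hU]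
    simp only [Matrix.of_apply, Finset.sum_mul]
    rw [rot3]
  -- the inner 8-fold identity
  have h1 : ∀ (b : B) (c : C) (cb : Cbar) (b₂ : B) (c₂ : C) (cb₂ : Cbar),
      (∑ b' : B, ∑ g : G, ∑ a' : A, ∑ a'' : A,
          (∑ ab : Abar, ∑ bb : Bbar, U1 (a0, ab) g * U2 (b, bb) (a', ab) * U3 (c, cb) (b', bb))
            * P a' a''
            * star (∑ ab : Abar, ∑ bb : Bbar,
                U1 (a0, ab) g * U2 (b₂, bb) (a'', ab) * U3 (c₂, cb₂) (b', bb)))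
        = s b c cb b₂ c₂ cb₂ := by
    intro b c cb b₂ c₂ cb₂
    have hφ : ∀ (xb : B) (xc : C) (xcb : Cbar) (a' : A) (b' : B) (g : G),
        (∑ ab : Abar, ∑ bb : Bbar, U1 (a0, ab) g * U2 (xb, bb) (a', ab) * U3 (xc, xcb) (b', bb))
          = ∑ ab : Abar, U1 (a0, ab) g
              * (∑ bb : Bbar, U2 (xb, bb) (a', ab) * U3 (xc, xcb) (b', bb)) := by
      intro xb xc xcb a' b' g
      refine Finset.sum_congr rfl fun ab _ => ?_
      rw [Finset.mul_sum]
      exact Finset.sum_congr rfl fun bb _ => by ring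
    calc (∑ b' : B, ∑ g : G, ∑ a' : A, ∑ a'' : A,
          (∑ ab : Abar, ∑ bb : Bbar, U1 (a0, ab) g * U2 (b, bb) (a', ab) * U3 (c, cb) (b', bb))
            * P a' a''
            * star (∑ ab : Abar, ∑ bb : Bbar,
                U1 (a0, ab) g * U2 (b₂, bb) (a'', ab) * U3 (c₂, cb₂) (b', bb)))
        = ∑ b' : B, ∑ a' : A, ∑ a'' : A, P a' a''
            * (∑ ab : Abar,
                (∑ bb : Bbar, U2 (b, bb) (a', ab) * U3 (c, cb) (b', bb))
                  * star (∑ bb : Bbar, U2 (b₂, bb) (a'', ab) * U3 (c₂, cb₂) (b', bb))) := by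
          refine Finset.sum_congr rfl fun b' _ => ?_
          rw [rot3, rot3]
          refine Finset.sum_congr rfl fun a' _ => Finset.sum_congr rfl fun a'' _ => ?_
          calc (∑ g : G,
                (∑ ab : Abar, ∑ bb : Bbar,
                    U1 (a0, ab) g * U2 (b, bb) (a', ab) * U3 (c, cb) (b', bb))
                  * P a' a''
                  * star (∑ ab : Abar, ∑ bb : Bbar,
                      U1 (a0, ab) g * U2 (b₂, bb) (a'', ab) * U3 (c₂, cb₂) (b', bb)))
              = ∑ g : G, P a' a''
                  * ((∑ ab : Abar, U1 (a0, ab) g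
                        * (∑ bb : Bbar, U2 (b, bb) (a', ab) * U3 (c, cb) (b', bb)))
                    * star (∑ ab : Abar, U1 (a0, ab) g
                        * (∑ bb : Bbar, U2 (b₂, bb) (a'', ab) * U3 (c₂, cb₂) (b', bb)))) := by
                refine Finset.sum_congr rfl fun g _ => ?_
                rw [hφ b c cb a' b' g, hφ b₂ c₂ cb₂ a'' b' g]
                ring
            _ = P a' a'' * ∑ g : G,
                  ((∑ ab : Abar, U1 (a0, ab) g
                      * (∑ bb : Bbar, U2 (b, bb) (a', ab) * U3 (c, cb) (b', bb)))
                    * star (∑ ab : Abar, U1 (a0, ab) g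
                      * (∑ bb : Bbar, U2 (b₂, bb) (a'', ab) * U3 (c₂, cb₂) (b', bb)))) := by
                rw [Finset.mul_sum]
            _ = P a' a'' * ∑ ab : Abar,
                  (∑ bb : Bbar, U2 (b, bb) (a', ab) * U3 (c, cb) (b', bb))
                    * star (∑ bb : Bbar, U2 (b₂, bb) (a'', ab) * U3 (c₂, cb₂) (b', bb)) := by
                congr 1
                exact pair_collapse (fun ab g => U1 (a0, ab) g) hu1pair
                  (fun ab => ∑ bb : Bbar, U2 (b, bb) (a', ab) * U3 (c, cb) (b', bb))
                  (fun ab => ∑ bb : Bbar, U2 (b₂, bb) (a'', ab) * U3 (c₂, cb₂) (b', bb))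
      _ = ∑ b' : B, ∑ a' : A, ∑ a'' : A, ∑ ab : Abar, ∑ bb : Bbar, ∑ bb₂ : Bbar,
            P a' a'' * (U2 (b, bb) (a', ab) * U3 (c, cb) (b', bb))
              * star (U2 (b₂, bb₂) (a'', ab) * U3 (c₂, cb₂) (b', bb₂)) := by
          refine Finset.sum_congr rfl fun b' _ => Finset.sum_congr rfl fun a' _ =>
            Finset.sum_congr rfl fun a'' _ => ?_
          simp only [star_sum]
          simp only [Finset.mul_sum, Finset.sum_mul]
          refine Finset.sum_congr rfl fun ab _ => ?_
          rw [Finset.sum_comm]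
          refine Finset.sum_congr rfl fun bb _ => Finset.sum_congr rfl fun bb₂ _ => ?_
          ring
      _ = ∑ b' : B, ∑ bb : Bbar, ∑ bb₂ : Bbar, ∑ a' : A, ∑ a'' : A, ∑ ab : Abar,
            P a' a'' * (U2 (b, bb) (a', ab) * U3 (c, cb) (b', bb))
              * star (U2 (b₂, bb₂) (a'', ab) * U3 (c₂, cb₂) (b', bb₂)) := by
          refine Finset.sum_congr rfl fun b' _ => ?_
          rw [rot5, rot5]
      _ = ∑ b' : B, ∑ bb : Bbar, ∑ bb₂ : Bbar,
            U3 (c, cb) (b', bb)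
              * (∑ a' : A, ∑ a'' : A, ∑ ab : Abar,
                  U2 (b, bb) (a', ab) * P a' a'' * star (U2 (b₂, bb₂) (a'', ab)))
              * star (U3 (c₂, cb₂) (b', bb₂)) := by
          refine Finset.sum_congr rfl fun b' _ => Finset.sum_congr rfl fun bb _ =>
            Finset.sum_congr rfl fun bb₂ _ => ?_
          simp only [Finset.mul_sum, Finset.sum_mul]
          refine Finset.sum_congr rfl fun a' _ => Finset.sum_congr rfl fun a'' _ =>
            Finset.sum_congr rfl fun ab _ => ?_
          rw [star_mul']
          ring
      _ = s b c cb b₂ c₂ cb₂ := by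
          rw [hse]
          refine Finset.sum_congr rfl fun b' _ => Finset.sum_congr rfl fun bb _ =>
            Finset.sum_congr rfl fun bb₂ _ => ?_
          rw [hQ2e]
  -- entrywise consequence of hM
  have hMe : ∀ (a : A) (b : B) (c : C) (f : F) (b₂ : B) (c₂ : C) (f₂ : F),
      (∑ a' : A, ∑ a'' : A, ∑ r : B × (C × G),
          U ((a, (b, c)), f) (a', r) * P a' a'' * star (U ((a, (b₂, c₂)), f₂) (a'', r)))
        = (if b = b₂ then (1:ℂ) else 0) * (if c = c₂ then (1:ℂ) else 0) * M f f₂ := by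
    intro a b c f b₂ c₂ f₂
    have h := congrFun (congrFun hM ((a, (b, c)), f)) ((a, (b₂, c₂)), f₂)
    rw [kron_tri U P ((a, (b, c)), f) ((a, (b₂, c₂)), f₂)] at h
    rw [h]
    by_cases hb : b = b₂ <;> by_cases hc : c = c₂ <;>
      simp [Matrix.kroneckerMap_apply, Matrix.one_apply, Prod.mk.injEq, hb, hc]
  -- the key identity
  have hbig : ∀ (b : B) (c : C) (f : F) (b₂ : B) (c₂ : C) (f₂ : F),
      (∑ pq : C × Cbar, ∑ q : C × Cbar,
          U4 f pq * ((if pq.1 = q.1 then (1:ℂ) else 0) * s b c pq.2 b₂ c₂ q.2) * star (U4 f₂ q))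
        = (if b = b₂ then (1:ℂ) else 0) * (if c = c₂ then (1:ℂ) else 0) * M f f₂ := by
    intro b c f b₂ c₂ f₂
    calc (∑ pq : C × Cbar, ∑ q : C × Cbar,
          U4 f pq * ((if pq.1 = q.1 then (1:ℂ) else 0) * s b c pq.2 b₂ c₂ q.2) * star (U4 f₂ q))
        = ∑ c' : C, ∑ cb : Cbar, ∑ cb₂ : Cbar,
            U4 f (c', cb) * s b c cb b₂ c₂ cb₂ * star (U4 f₂ (c', cb₂)) :=
          prodsum (U4 f) (fun q => star (U4 f₂ q)) (fun cb cb₂ => s b c cb b₂ c₂ cb₂)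
      _ = (∑ a' : A, ∑ a'' : A, ∑ r : B × (C × G),
            U ((a0, (b, c)), f) (a', r) * P a' a'' * star (U ((a0, (b₂, c₂)), f₂) (a'', r))) := by
          symm
          calc (∑ a' : A, ∑ a'' : A, ∑ r : B × (C × G),
              U ((a0, (b, c)), f) (a', r) * P a' a'' * star (U ((a0, (b₂, c₂)), f₂) (a'', r)))
              = ∑ a' : A, ∑ a'' : A, ∑ b' : B, ∑ c' : C, ∑ g : G,
                  U ((a0, (b, c)), f) (a', (b', (c', g))) * P a' a''
                    * star (U ((a0, (b₂, c₂)), f₂) (a'', (b', (c', g)))) := by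
                refine Finset.sum_congr rfl fun a' _ => Finset.sum_congr rfl fun a'' _ => ?_
                rw [Fintype.sum_prod_type]
                refine Finset.sum_congr rfl fun b' _ => ?_
                rw [Fintype.sum_prod_type]
            _ = ∑ a' : A, ∑ a'' : A, ∑ b' : B, ∑ c' : C, ∑ g : G, ∑ cb : Cbar, ∑ cb₂ : Cbar,
                  U4 f (c', cb)
                    * ((∑ ab : Abar, ∑ bb : Bbar,
                          U1 (a0, ab) g * U2 (b, bb) (a', ab) * U3 (c, cb) (b', bb))
                        * P a' a''
                        * star (∑ ab : Abar, ∑ bb : Bbar,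
                            U1 (a0, ab) g * U2 (b₂, bb) (a'', ab) * U3 (c₂, cb₂) (b', bb)))
                    * star (U4 f₂ (c', cb₂)) := by
                refine Finset.sum_congr rfl fun a' _ => Finset.sum_congr rfl fun a'' _ =>
                  Finset.sum_congr rfl fun b' _ => Finset.sum_congr rfl fun c' _ =>
                  Finset.sum_congr rfl fun g _ => ?_
                rw [hUe a0 b c f a' b' c' g, hUe a0 b₂ c₂ f₂ a'' b' c' g]
                rw [star_sum, Finset.sum_mul, Finset.sum_mul]
                refine Finset.sum_congr rfl fun cb _ => ?_
                rw [Finset.mul_sum]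
                refine Finset.sum_congr rfl fun cb₂ _ => ?_
                rw [star_mul']
                ring
            _ = ∑ c' : C, ∑ cb : Cbar, ∑ cb₂ : Cbar, ∑ b' : B, ∑ g : G, ∑ a' : A, ∑ a'' : A,
                  U4 f (c', cb)
                    * ((∑ ab : Abar, ∑ bb : Bbar,
                          U1 (a0, ab) g * U2 (b, bb) (a', ab) * U3 (c, cb) (b', bb))
                        * P a' a''
                        * star (∑ ab : Abar, ∑ bb : Bbar,
                            U1 (a0, ab) g * U2 (b₂, bb) (a'', ab) * U3 (c₂, cb₂) (b', bb)))
                    * star (U4 f₂ (c', cb₂)) := by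
                rw [rot7, rot7, rot7, rot7]
                refine Finset.sum_congr rfl fun c' _ => ?_
                rw [rot6, rot6, rot6, rot6, rot6]
                refine Finset.sum_congr rfl fun cb _ => Finset.sum_congr rfl fun cb₂ _ => ?_
                rw [rot4, rot4]
            _ = ∑ c' : C, ∑ cb : Cbar, ∑ cb₂ : Cbar,
                  U4 f (c', cb)
                    * (∑ b' : B, ∑ g : G, ∑ a' : A, ∑ a'' : A,
                        (∑ ab : Abar, ∑ bb : Bbar,
                            U1 (a0, ab) g * U2 (b, bb) (a', ab) * U3 (c, cb) (b', bb))
                          * P a' a''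
                          * star (∑ ab : Abar, ∑ bb : Bbar,
                              U1 (a0, ab) g * U2 (b₂, bb) (a'', ab) * U3 (c₂, cb₂) (b', bb)))
                    * star (U4 f₂ (c', cb₂)) := by
                refine Finset.sum_congr rfl fun c' _ => Finset.sum_congr rfl fun cb _ =>
                  Finset.sum_congr rfl fun cb₂ _ => ?_
                simp only [Finset.mul_sum, Finset.sum_mul]
            _ = ∑ c' : C, ∑ cb : Cbar, ∑ cb₂ : Cbar,
                  U4 f (c', cb) * s b c cb b₂ c₂ cb₂ * star (U4 f₂ (c', cb₂)) := by
                refine Finset.sum_congr rfl fun c' _ => Finset.sum_congr rfl fun cb _ =>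
                  Finset.sum_congr rfl fun cb₂ _ => ?_
                rw [h1]
      _ = (if b = b₂ then (1:ℂ) else 0) * (if c = c₂ then (1:ℂ) else 0) * M f f₂ :=
          hMe a0 b c f b₂ c₂ f₂
  -- invert U4
  have step2 : ∀ (b : B) (c : C) (b₂ : B) (c₂ : C) (u v : C × Cbar),
      (if u.1 = v.1 then (1:ℂ) else 0) * s b c u.2 b₂ c₂ v.2
        = (if b = b₂ then (1:ℂ) else 0) * (if c = c₂ then (1:ℂ) else 0) * (U4ᴴ * M * U4) u v := by
    intro b c b₂ c₂ u v
    have h := sandwich_collapse U4 hU4.2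
      (fun p q => (if p.1 = q.1 then (1:ℂ) else 0) * s b c p.2 b₂ c₂ q.2) u v
    rw [← h]
    calc (∑ x : F, ∑ y : F, star (U4 x u)
            * (∑ p : C × Cbar, ∑ q : C × Cbar,
                U4 x p * ((if p.1 = q.1 then (1:ℂ) else 0) * s b c p.2 b₂ c₂ q.2) * star (U4 y q))
            * U4 y v)
        = ∑ x : F, ∑ y : F, star (U4 x u)
            * ((if b = b₂ then (1:ℂ) else 0) * (if c = c₂ then (1:ℂ) else 0) * M x y)
            * U4 y v := by
          refine Finset.sum_congr rfl fun x _ => Finset.sum_congr rfl fun y _ => ?_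
          rw [hbig b c x b₂ c₂ y]
      _ = (if b = b₂ then (1:ℂ) else 0) * (if c = c₂ then (1:ℂ) else 0)
            * ∑ x : F, ∑ y : F, star (U4 x u) * M x y * U4 y v := by
          rw [Finset.mul_sum]
          refine Finset.sum_congr rfl fun x _ => ?_
          rw [Finset.mul_sum]
          refine Finset.sum_congr rfl fun y _ => ?_
          ring
      _ = (if b = b₂ then (1:ℂ) else 0) * (if c = c₂ then (1:ℂ) else 0)
            * (U4ᴴ * M * U4) u v := by
          rw [sandwichM]
  -- define N
  obtain ⟨N, hNdef⟩ : ∃ N : Matrix Cbar Cbar ℂ,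
      N = Matrix.of (fun cb cb₂ => s b0 c0 cb b0 c0 cb₂) := ⟨_, rfl⟩
  have hNe : ∀ cb cb₂ : Cbar, N cb cb₂ = s b0 c0 cb b0 c0 cb₂ := by
    intro cb cb₂
    simp only [hNdef, Matrix.of_apply]
  have hKval : ∀ cb cb₂ : Cbar, (U4ᴴ * M * U4) (c0, cb) (c0, cb₂) = N cb cb₂ := by
    intro cb cb₂
    rw [hNe]
    have h := step2 b0 c0 b0 c0 (c0, cb) (c0, cb₂)
    simpa using h.symm
  have hs : ∀ (b : B) (c : C) (cb : Cbar) (b₂ : B) (c₂ : C) (cb₂ : Cbar),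
      s b c cb b₂ c₂ cb₂
        = (if b = b₂ then (1:ℂ) else 0) * (if c = c₂ then (1:ℂ) else 0) * N cb cb₂ := by
    intro b c cb b₂ c₂ cb₂
    have h := step2 b c b₂ c₂ (c0, cb) (c0, cb₂)
    rw [hKval] at h
    simpa using h
  -- invert U3
  have step4 : ∀ (b b₂ : B) (u v : B × Bbar),
      (if u.1 = v.1 then (1:ℂ) else 0) * Q2 (b, u.2) (b₂, v.2)
        = (if b = b₂ then (1:ℂ) else 0)
            * (U3ᴴ * ((1 : Matrix C C ℂ) ⊗ₖ N) * U3) u v := by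
    intro b b₂ u v
    have h := sandwich_collapse U3 hU3.2
      (fun p q => (if p.1 = q.1 then (1:ℂ) else 0) * Q2 (b, p.2) (b₂, q.2)) u v
    rw [← h]
    calc (∑ x : C × Cbar, ∑ y : C × Cbar, star (U3 x u)
            * (∑ p : B × Bbar, ∑ q : B × Bbar,
                U3 x p * ((if p.1 = q.1 then (1:ℂ) else 0) * Q2 (b, p.2) (b₂, q.2)) * star (U3 y q))
            * U3 y v)
        = ∑ x : C × Cbar, ∑ y : C × Cbar, star (U3 x u)
            * ((if b = b₂ then (1:ℂ) else 0) * ((1 : Matrix C C ℂ) ⊗ₖ N) x y) * U3 y v := by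
          refine Finset.sum_congr rfl fun x _ => Finset.sum_congr rfl fun y _ => ?_
          obtain ⟨xc, xcb⟩ := x
          obtain ⟨yc, ycb⟩ := y
          have hinner : (∑ p : B × Bbar, ∑ q : B × Bbar,
              U3 (xc, xcb) p * ((if p.1 = q.1 then (1:ℂ) else 0) * Q2 (b, p.2) (b₂, q.2))
                * star (U3 (yc, ycb) q)) = s b xc xcb b₂ yc ycb := by
            rw [hse]
            exact prodsum (U3 (xc, xcb)) (fun q => star (U3 (yc, ycb) q))
              (fun bb bb₂ => Q2 (b, bb) (b₂, bb₂))
          rw [hinner, hs]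
          simp only [Matrix.kroneckerMap_apply, Matrix.one_apply]
          ring
      _ = (if b = b₂ then (1:ℂ) else 0)
            * ∑ x : C × Cbar, ∑ y : C × Cbar,
                star (U3 x u) * ((1 : Matrix C C ℂ) ⊗ₖ N) x y * U3 y v := by
          rw [Finset.mul_sum]
          refine Finset.sum_congr rfl fun x _ => ?_
          rw [Finset.mul_sum]
          refine Finset.sum_congr rfl fun y _ => ?_
          ring
      _ = (if b = b₂ then (1:ℂ) else 0)
            * (U3ᴴ * ((1 : Matrix C C ℂ) ⊗ₖ N) * U3) u v := by
          rw [sandwichM]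
  -- structure of Q2 and of U3ᴴ(1⊗N)U3
  obtain ⟨W0, hWdef⟩ : ∃ W0 : Matrix Bbar Bbar ℂ,
      W0 = Matrix.of (fun bb bb₂ =>
        (U3ᴴ * ((1 : Matrix C C ℂ) ⊗ₖ N) * U3) (b0, bb) (b0, bb₂)) := ⟨_, rfl⟩
  have hWe : ∀ bb bb₂ : Bbar,
      (U3ᴴ * ((1 : Matrix C C ℂ) ⊗ₖ N) * U3) (b0, bb) (b0, bb₂) = W0 bb bb₂ := by
    intro bb bb₂
    simp only [hWdef, Matrix.of_apply]
  have hQ2k : Q2 = (1 : Matrix B B ℂ) ⊗ₖ W0 := by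
    ext ⟨b, bb⟩ ⟨b₂, bb₂⟩
    have h := step4 b b₂ (b0, bb) (b0, bb₂)
    rw [hWe] at h
    simp only [Matrix.kroneckerMap_apply, Matrix.one_apply]
    simpa using h
  have hYk : U3ᴴ * ((1 : Matrix C C ℂ) ⊗ₖ N) * U3 = (1 : Matrix B B ℂ) ⊗ₖ W0 := by
    ext ⟨e, bb⟩ ⟨e₂, bb₂⟩
    have h := step4 b0 b0 (e, bb) (e₂, bb₂)
    have hq : Q2 (b0, bb) (b0, bb₂) = W0 bb bb₂ := by
      rw [hQ2k]
      simp [Matrix.kroneckerMap_apply, Matrix.one_apply]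
    rw [hq] at h
    simp only [Matrix.kroneckerMap_apply, Matrix.one_apply]
    simpa using h.symm
  have hQ3 : U3 * Q2 * U3ᴴ = (1 : Matrix C C ℂ) ⊗ₖ N := by
    rw [hQ2k, ← hYk]
    calc U3 * (U3ᴴ * ((1 : Matrix C C ℂ) ⊗ₖ N) * U3) * U3ᴴ
        = (U3 * U3ᴴ) * ((1 : Matrix C C ℂ) ⊗ₖ N) * (U3 * U3ᴴ) := by
          simp only [Matrix.mul_assoc]
      _ = (1 : Matrix C C ℂ) ⊗ₖ N := by
          rw [hU3.1, Matrix.one_mul, Matrix.mul_one]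
  -- conclude
  rw [hQ3]
  have hmul : ∀ Z Wm : Matrix (C × Cbar) (C × Cbar) ℂ,
      (U4 * Z * U4ᴴ) * (U4 * Wm * U4ᴴ) = U4 * (Z * Wm) * U4ᴴ := by
    intro Z Wm
    have e : U4ᴴ * (U4 * (Wm * U4ᴴ)) = Wm * U4ᴴ := by
      rw [← Matrix.mul_assoc, hU4.2, Matrix.one_mul]
    simp only [Matrix.mul_assoc, e]
  rw [hmul, hmul]
  congr 1
  rw [← Matrix.mul_kronecker_mul, ← Matrix.mul_kronecker_mul, Matrix.one_mul, Matrix.mul_one,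
    Matrix.one_mul, Matrix.mul_one]
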